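/- In a finite directed acyclic graph with source s and sink t where every vertex lies on an s-t path, the minimum number of s-t paths needed to cover all vertices equals the minimum value of a feasible flow in the vertex-split network with lower bound 1 on each split edge. -/

import Mathlib

/-- A walk in a directed graph given by edge relation `E`. -/
def IsWalk {V : Type*} (E : V → V → Prop) (l : List V) : Prop :=
  l ≠ [] ∧ l.Chain' E

/-- An s-t walk. -/
def IsSTWalk {V : Type*} (E : V → V → Prop) (s t : V) (l : List V) : Prop :=
  IsWalk E l ∧ l.head? = some s ∧ l.getLast? = some t

/-- Edges of the vertex-split network: each vertex `v` is split into the entry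
vertex `Sum.inl v` (i.e. `v⁺`) and the exit vertex `Sum.inr v` (i.e. `v⁺⁺`),
joined by the split edge `(v⁺, v⁺⁺)`; each original edge `(u,v)` becomes
`(u⁺⁺, v⁺)`. -/
def SplitEdge {V : Type*} (E : V → V → Prop) : V ⊕ V → V ⊕ V → Prop :=
  fun a b =>
    match a, b with
    | Sum.inl v, Sum.inr w => v = w
    | Sum.inr u, Sum.inl v => E u v
    | _, _ => False

/-- Lower bounds of the split network: 1 on the split edge `(v⁺, v⁺⁺)` of every
internal vertex `v ∉ {s, t}`, 0 everywhere else. -/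
def SplitLB {V : Type*} [DecidableEq V] (s t : V) : V ⊕ V → V ⊕ V → ℕ :=
  fun a b =>
    match a, b with
    | Sum.inl v, Sum.inr w => if v = w ∧ v ≠ s ∧ v ≠ t then 1 else 0
    | _, _ => 0

/-- A feasible (integer) flow on the split network: supported on the edges,
meeting the lower bounds, with every edge capacity `|V| - 2`, and conserving
flow at every vertex other than the source `s⁺` and the sink `t⁺⁺`. -/
def FeasibleSplitFlow {V : Type*} [Fintype V] [DecidableEq V]
    (E : V → V → Prop) (s t : V) (f : V ⊕ V → V ⊕ V → ℕ) : Prop :=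
  (∀ a b, ¬ SplitEdge E a b → f a b = 0) ∧
  (∀ a b, SplitLB s t a b ≤ f a b) ∧
  (∀ a b, SplitEdge E a b → f a b ≤ Fintype.card V - 2) ∧
  (∀ w, w ≠ Sum.inl s → w ≠ Sum.inr t → (∑ a, f a w) = ∑ b, f w b)

/-- The value of a flow on the split network: total flow out of the source `s⁺`. -/
def SplitFlowValue {V : Type*} [Fintype V] (s : V) (f : V ⊕ V → V ⊕ V → ℕ) : ℕ :=
  ∑ b, f (Sum.inl s) b

set_option linter.unusedSectionVars false
set_option linter.unusedVariables false

namespace MCF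
/-- consecutive pairs of a list -/
def pairs {α : Type*} (l : List α) : List (α × α) := l.zip l.tail

@[simp] lemma pairs_nil {α : Type*} : pairs ([] : List α) = [] := rfl
@[simp] lemma pairs_single {α : Type*} (a : α) : pairs [a] = [] := rfl
@[simp] lemma pairs_cons_cons {α : Type*} (a b : α) (l : List α) :
    pairs (a :: b :: l) = (a, b) :: pairs (b :: l) := rfl

lemma map_snd_pairs {α : Type*} (l : List α) : (pairs l).map Prod.snd = l.tail := by
  match l with
  | [] => rfl
  | [a] => rfl
  | a :: b :: r => simp [map_snd_pairs (b :: r)]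

lemma map_fst_pairs {α : Type*} (l : List α) : (pairs l).map Prod.fst = l.dropLast := by
  match l with
  | [] => rfl
  | [a] => rfl
  | a :: b :: r =>
    simp only [pairs_cons_cons, List.map_cons, map_fst_pairs (b :: r)]
    rfl

lemma chain'_of_pairs {α : Type*} {R : α → α → Prop} {l : List α}
    (h : l.Chain' R) {p : α × α} (hp : p ∈ pairs l) : R p.1 p.2 := by
  match l with
  | [] => simp at hp
  | [a] => simp at hp
  | a :: b :: r =>
    rw [List.Chain', List.isChain_cons_cons] at h
    rcases List.mem_cons.1 hp with rfl | hp
    · exact h.1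
    · exact chain'_of_pairs h.2 hp

/-- counting with propositional equality -/
def cnt {α : Type*} [DecidableEq α] (a : α) (l : List α) : ℕ :=
  (l.filter (fun x => x = a)).length

section cnt
variable {α : Type*} [DecidableEq α]

@[simp] lemma cnt_nil (a : α) : cnt a ([] : List α) = 0 := rfl

lemma cnt_cons (a b : α) (l : List α) :
    cnt a (b :: l) = (if b = a then 1 else 0) + cnt a l := by
  unfold cnt
  by_cases h : b = a <;> simp [List.filter_cons, h, Nat.add_comm]

lemma cnt_eq_zero_of_not_mem {a : α} {l : List α} (h : a ∉ l) : cnt a l = 0 := by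
  induction l with
  | nil => rfl
  | cons b l ih =>
    rw [cnt_cons]
    simp only [List.mem_cons, not_or] at h
    rw [if_neg (fun hh => h.1 hh.symm), ih h.2]

lemma mem_of_cnt_pos {a : α} {l : List α} (h : 0 < cnt a l) : a ∈ l := by
  by_contra hm
  rw [cnt_eq_zero_of_not_mem hm] at h
  exact Nat.lt_irrefl 0 h

lemma cnt_pos_of_mem {a : α} {l : List α} (h : a ∈ l) : 0 < cnt a l := by
  induction l with
  | nil => simp at h
  | cons b l ih =>
    rw [cnt_cons]
    rcases List.mem_cons.1 h with rfl | h'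
    · simp
    · exact Nat.lt_of_lt_of_le (ih h') (Nat.le_add_left _ _)

lemma cnt_le_one_of_nodup {a : α} {l : List α} (h : l.Nodup) : cnt a l ≤ 1 := by
  induction l with
  | nil => simp [cnt]
  | cons b l ih =>
    rw [List.nodup_cons] at h
    rw [cnt_cons]
    by_cases hb : b = a
    · subst hb
      rw [cnt_eq_zero_of_not_mem h.1]
      simp
    · rw [if_neg hb, Nat.zero_add]
      exact ih h.2

lemma cnt_append (a : α) (l₁ l₂ : List α) :
    cnt a (l₁ ++ l₂) = cnt a l₁ + cnt a l₂ := by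
  unfold cnt
  rw [List.filter_append, List.length_append]

lemma sum_cnt_snd [Fintype α] (x : α) (L : List (α × α)) :
    (∑ a : α, cnt (a, x) L) = cnt x (L.map Prod.snd) := by
  induction L with
  | nil => simp
  | cons p L ih =>
    rcases p with ⟨u, v⟩
    simp only [cnt_cons, List.map_cons]
    rw [Finset.sum_add_distrib, ih]
    congr 1
    by_cases hv : v = x
    · subst hv
      rw [if_pos rfl, Finset.sum_eq_single u]
      · simp
      · intro b _ hb
        rw [if_neg]
        simp only [Prod.mk.injEq, not_and]
        exact fun h => absurd h.symm hb
      · simp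
    · rw [if_neg hv, Finset.sum_eq_zero]
      intro b _
      rw [if_neg]
      simp [hv]

lemma sum_cnt_fst [Fintype α] (x : α) (L : List (α × α)) :
    (∑ b : α, cnt (x, b) L) = cnt x (L.map Prod.fst) := by
  induction L with
  | nil => simp
  | cons p L ih =>
    rcases p with ⟨u, v⟩
    simp only [cnt_cons, List.map_cons]
    rw [Finset.sum_add_distrib, ih]
    congr 1
    by_cases hu : u = x
    · subst hu
      rw [if_pos rfl, Finset.sum_eq_single v]
      · simp
      · intro b _ hb
        rw [if_neg]
        simp only [Prod.mk.injEq, not_and]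
        exact fun _ h => absurd h.symm hb
      · simp
    · rw [if_neg hu, Finset.sum_eq_zero]
      intro b _
      rw [if_neg]
      simp [hu]
end cnt

section C
open Relation
variable {α : Type*} {E : α → α → Prop}

lemma transGen_of_chain' {l : List α} (h : l.Chain' E) :
    ∀ a l', l = a :: l' → ∀ b ∈ l', Relation.TransGen E a b := by
  induction l with
  | nil => intro a l' h'; cases h'
  | cons x l ih =>
    intro a l' h' b hb
    cases h'
    match l, hb with
    | c :: l'', hb =>
      rw [List.Chain', List.isChain_cons_cons] at h
      rcases List.mem_cons.1 hb with rfl | hb'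
      · exact Relation.TransGen.single h.1
      · exact (Relation.TransGen.single h.1).trans (ih h.2 c l'' rfl b hb')

lemma nodup_of_chain' (hacyc : ∀ v, ¬ Relation.TransGen E v v)
    {l : List α} (h : l.Chain' E) : l.Nodup := by
  induction l with
  | nil => simp
  | cons a l ih =>
    rw [List.nodup_cons]
    refine ⟨fun hmem => hacyc a (transGen_of_chain' h a l rfl a hmem), ih h.tail⟩
end C
end MCF

namespace MCF
section split
variable {V : Type*} [DecidableEq V] {E : V → V → Prop}

def splitList : List V → List (V ⊕ V)
  | [] => []
  | v :: l => Sum.inl v :: Sum.inr v :: splitList l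

@[simp] lemma splitList_nil : splitList ([] : List V) = [] := rfl
@[simp] lemma splitList_cons (v : V) (l : List V) :
    splitList (v :: l) = Sum.inl v :: Sum.inr v :: splitList l := rfl

@[simp] lemma mem_splitList_inl {v : V} {l : List V} : Sum.inl v ∈ splitList l ↔ v ∈ l := by
  induction l with
  | nil => simp
  | cons a l ih => simp [ih]

@[simp] lemma mem_splitList_inr {v : V} {l : List V} : Sum.inr v ∈ splitList l ↔ v ∈ l := by
  induction l with
  | nil => simp
  | cons a l ih => simp [ih]

@[simp] lemma cnt_splitList_inl (v : V) (l : List V) :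
    cnt (Sum.inl v) (splitList l) = cnt v l := by
  induction l with
  | nil => rfl
  | cons a l ih =>
    rw [splitList_cons, cnt_cons, cnt_cons, cnt_cons, ih,
      if_neg (by simp : ¬ (Sum.inr a : V ⊕ V) = Sum.inl v)]
    by_cases h : a = v
    · rw [if_pos (by simp [h]), if_pos h, Nat.zero_add]
    · rw [if_neg (by simp [h]), if_neg h, Nat.zero_add]

lemma head?_splitList {s : V} {l : List V} (h : l.head? = some s) :
    (splitList l).head? = some (Sum.inl s) := by
  match l with
  | a :: l => simp_all

lemma getLast?_splitList {t : V} {l : List V} (h : l.getLast? = some t) :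
    (splitList l).getLast? = some (Sum.inr t) := by
  match l with
  | [a] => simp_all [splitList]
  | a :: b :: l =>
    rw [List.getLast?_cons_cons] at h
    have := getLast?_splitList (l := b :: l) h
    simp only [splitList_cons]
    rw [List.getLast?_cons_cons, List.getLast?_cons_cons]
    exact this

lemma chain'_splitList {l : List V} (h : l.Chain' E) :
    (splitList l).Chain' (SplitEdge E) := by
  match l with
  | [] => exact List.isChain_nil
  | [a] => exact List.isChain_pair.2 rfl
  | a :: b :: l =>
    rw [List.Chain', List.isChain_cons_cons] at h
    have ih := chain'_splitList h.2
    simp only [splitList_cons] at ih ⊢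
    rw [List.Chain', List.isChain_cons_cons, List.isChain_cons_cons]
    exact ⟨rfl, h.1, ih⟩

lemma nodup_splitList {l : List V} (h : l.Nodup) : (splitList l).Nodup := by
  induction l with
  | nil => simp
  | cons a l ih =>
    rw [List.nodup_cons] at h
    simp only [splitList_cons, List.nodup_cons, List.mem_cons, mem_splitList_inl,
      mem_splitList_inr]
    exact ⟨by simp [h.1], h.1, ih h.2⟩

lemma mem_pairs_splitList {v : V} {l : List V} (h : v ∈ l) :
    (Sum.inl v, Sum.inr v) ∈ pairs (splitList l) := by
  match l with
  | [] => simp at h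
  | [a] =>
    rcases List.mem_singleton.1 h with rfl
    simp [splitList, pairs]
  | a :: b :: l =>
    rcases List.mem_cons.1 h with rfl | h'
    · simp
    · have := mem_pairs_splitList (l := b :: l) h'
      simp only [splitList_cons] at this ⊢
      rw [pairs_cons_cons, pairs_cons_cons]
      exact List.mem_cons_of_mem _ (List.mem_cons_of_mem _ this)
end split
end MCF

namespace MCF
section order
variable {V : Type*} {E : V → V → Prop}

/-- projection of the split graph back to `V` -/
def π : V ⊕ V → V := Sum.elim id id

/-- a transitive irreflexive relation containing `SplitEdge E` -/
def Q (E : V → V → Prop) : V ⊕ V → V ⊕ V → Prop :=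
  fun a b => Relation.TransGen E (π a) (π b) ∨ (π a = π b ∧ a.isLeft ∧ b.isRight)

lemma Q_of_splitEdge {a b : V ⊕ V} (h : SplitEdge E a b) : Q E a b := by
  match a, b with
  | Sum.inl v, Sum.inr w =>
    rcases h with rfl
    exact Or.inr ⟨rfl, rfl, rfl⟩
  | Sum.inr u, Sum.inl v =>
    exact Or.inl (Relation.TransGen.single h)

lemma Q_trans {a b c : V ⊕ V} (h1 : Q E a b) (h2 : Q E b c) : Q E a c := by
  rcases h1 with h1 | ⟨e1, l1, r1⟩
  · rcases h2 with h2 | ⟨e2, _, r2⟩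
    · exact Or.inl (h1.trans h2)
    · exact Or.inl (e2 ▸ h1)
  · rcases h2 with h2 | ⟨e2, l2, r2⟩
    · exact Or.inl (e1 ▸ h2)
    · cases b <;> simp_all

lemma Q_irrefl (hacyc : ∀ v, ¬ Relation.TransGen E v v) (a : V ⊕ V) : ¬ Q E a a := by
  intro h
  rcases h with h | ⟨_, l, r⟩
  · exact hacyc _ h
  · cases a <;> simp_all

lemma Q_of_transGen {a b : V ⊕ V} (h : Relation.TransGen (SplitEdge E) a b) : Q E a b := by
  induction h with
  | single h => exact Q_of_splitEdge h
  | tail _ h ih => exact Q_trans ih (Q_of_splitEdge h)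

lemma splitEdge_acyclic (hacyc : ∀ v, ¬ Relation.TransGen E v v) (a : V ⊕ V) :
    ¬ Relation.TransGen (SplitEdge E) a a :=
  fun h => Q_irrefl hacyc a (Q_of_transGen h)

lemma wf_Q [Finite V] (hacyc : ∀ v, ¬ Relation.TransGen E v v) : WellFounded (Q E) := by
  haveI : IsTrans (V ⊕ V) (Q E) := ⟨fun _ _ _ => Q_trans⟩
  haveI : IsIrrefl (V ⊕ V) (Q E) := ⟨Q_irrefl hacyc⟩
  exact Finite.wellFounded_of_trans_of_irrefl _

lemma wf_flipQ [Finite V] (hacyc : ∀ v, ¬ Relation.TransGen E v v) :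
    WellFounded (flip (Q E)) := by
  haveI : IsTrans (V ⊕ V) (flip (Q E)) := ⟨fun _ _ _ h1 h2 => Q_trans h2 h1⟩
  haveI : IsIrrefl (V ⊕ V) (flip (Q E)) := ⟨Q_irrefl hacyc⟩
  exact Finite.wellFounded_of_trans_of_irrefl _
end order

section balance
variable {α : Type*} [DecidableEq α] [Fintype α]

lemma dropLast_append_of_getLast? {w : List α} {e : α} (h : w.getLast? = some e) :
    w = w.dropLast ++ [e] := by
  match w with
  | [] => simp at h
  | a :: l =>
    have hne : a :: l ≠ [] := by simp
    rw [List.getLast?_eq_getLast hne, Option.some_inj] at h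
    rw [← h]
    exact (List.dropLast_append_getLast hne).symm

lemma cnt_pairs_balance {w : List α} {h0 e0 x : α}
    (hh : w.head? = some h0) (hl : w.getLast? = some e0)
    (hx1 : x ≠ h0) (hx2 : x ≠ e0) :
    (∑ a, cnt (a, x) (pairs w)) = ∑ b, cnt (x, b) (pairs w) := by
  rw [sum_cnt_snd, sum_cnt_fst, map_snd_pairs, map_fst_pairs]
  have h1 : cnt x w.tail = cnt x w := by
    match w with
    | a :: l =>
      rw [List.head?_cons, Option.some_inj] at hh
      subst hh
      rw [List.tail_cons, cnt_cons, if_neg (Ne.symm hx1), Nat.zero_add]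
  have h2 : cnt x w.dropLast = cnt x w := by
    conv_rhs => rw [dropLast_append_of_getLast? hl]
    rw [cnt_append, cnt_cons, cnt_nil, if_neg (Ne.symm hx2)]
    simp
  rw [h1, h2]
end balance
end MCF

namespace MCF
section edgehelp
variable {V : Type*} {E : V → V → Prop} {s t : V}
lemma splitEdge_from_inl {v : V} {b : V ⊕ V} (h : SplitEdge E (Sum.inl v) b) :
    b = Sum.inr v := by
  match b with
  | Sum.inr w => rcases h with rfl; rfl
  | Sum.inl w => exact absurd h (by simp [SplitEdge])

lemma no_splitEdge_into_source (hs : ∀ u, ¬ E u s) (y : V ⊕ V) :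
    ¬ SplitEdge E y (Sum.inl s) := by
  match y with
  | Sum.inl u => simp [SplitEdge]
  | Sum.inr u => exact hs u

lemma no_splitEdge_from_sink (ht : ∀ u, ¬ E t u) (y : V ⊕ V) :
    ¬ SplitEdge E (Sum.inr t) y := by
  match y with
  | Sum.inl u => exact ht u
  | Sum.inr u => simp [SplitEdge]

end edgehelp

section flow
variable {V : Type*} [Fintype V] [DecidableEq V] {E : V → V → Prop} {s t : V}

variable {f : V ⊕ V → V ⊕ V → ℕ}

lemma value_eq_source_edge (hsupp : ∀ a b, ¬ SplitEdge E a b → f a b = 0) :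
    SplitFlowValue s f = f (Sum.inl s) (Sum.inr s) := by
  unfold SplitFlowValue
  refine Finset.sum_eq_single _ (fun b _ hb => hsupp _ _ (fun he => hb (splitEdge_from_inl he)))
    (by simp)

lemma flow_eq_zero (hacyc : ∀ v, ¬ Relation.TransGen E v v)
    (hs : ∀ u, ¬ E u s) (ht : ∀ u, ¬ E t u)
    (hsupp : ∀ a b, ¬ SplitEdge E a b → f a b = 0)
    (hcons : ∀ w, w ≠ Sum.inl s → w ≠ Sum.inr t → (∑ a, f a w) = ∑ b, f w b)
    (hval : f (Sum.inl s) (Sum.inr s) = 0) : ∀ x y, f x y = 0 := by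
  intro x
  induction x using (wf_Q hacyc).induction with
  | _ x ih =>
    have hin : ∀ y, f y x = 0 := by
      intro y
      by_cases he : SplitEdge E y x
      · exact ih y (Q_of_splitEdge he) x
      · exact hsupp _ _ he
    by_cases hx1 : x = Sum.inl s
    · subst hx1
      intro y
      by_cases hy : y = Sum.inr s
      · subst hy; exact hval
      · exact hsupp _ _ (fun he => hy (splitEdge_from_inl he))
    · by_cases hx2 : x = Sum.inr t
      · subst hx2
        exact fun y => hsupp _ _ (no_splitEdge_from_sink ht y)
      · have h := hcons x hx1 hx2
        rw [Finset.sum_eq_zero (fun y _ => hin y)] at h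
        intro y
        exact (Finset.sum_eq_zero_iff.1 h.symm) y (Finset.mem_univ y)

lemma walk_to_sink (hacyc : ∀ v, ¬ Relation.TransGen E v v)
    (hs : ∀ u, ¬ E u s)
    (hsupp : ∀ a b, ¬ SplitEdge E a b → f a b = 0)
    (hcons : ∀ w, w ≠ Sum.inl s → w ≠ Sum.inr t → (∑ a, f a w) = ∑ b, f w b) :
    ∀ x, (x = Sum.inr t ∨ ∃ y, 0 < f y x) →
      ∃ w : List (V ⊕ V), w.head? = some x ∧ w.getLast? = some (Sum.inr t) ∧
        w.Chain' (fun a b => 0 < f a b) := by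
  intro x
  induction x using (wf_flipQ hacyc).induction with
  | _ x ih =>
    intro hx
    by_cases hxt : x = Sum.inr t
    · subst hxt
      exact ⟨[Sum.inr t], rfl, rfl, List.isChain_singleton _⟩
    rcases hx with rfl | ⟨y₀, hy₀⟩
    · exact absurd rfl hxt
    have hxs : x ≠ Sum.inl s := by
      rintro rfl
      rw [hsupp _ _ (no_splitEdge_into_source hs y₀)] at hy₀
      exact Nat.lt_irrefl 0 hy₀
    have hpos : 0 < ∑ b, f x b := by
      rw [← hcons x hxs hxt]
      exact Nat.lt_of_lt_of_le hy₀ (Finset.single_le_sum (f := fun a => f a x)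
        (fun i _ => Nat.zero_le _) (Finset.mem_univ y₀))
    have hz : ∃ z, 0 < f x z := by
      by_contra hc
      push_neg at hc
      rw [Finset.sum_eq_zero (fun z _ => Nat.le_zero.1 (hc z))] at hpos
      exact Nat.lt_irrefl 0 hpos
    obtain ⟨z, hz⟩ := hz
    have hedge : SplitEdge E x z := by
      by_contra he
      rw [hsupp _ _ he] at hz
      exact Nat.lt_irrefl 0 hz
    obtain ⟨w', hw1, hw2, hw3⟩ := ih z (Q_of_splitEdge hedge) (Or.inr ⟨x, hz⟩)
    cases w' with
    | nil => simp at hw1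
    | cons z' w'' =>
      rw [List.head?_cons, Option.some_inj] at hw1
      rw [← hw1] at hz
      refine ⟨x :: z' :: w'', rfl, ?_, ?_⟩
      · rw [List.getLast?_cons_cons]
        exact hw2
      · rw [List.Chain', List.isChain_cons_cons]
        exact ⟨hz, hw3⟩

lemma decomp (hacyc : ∀ v, ¬ Relation.TransGen E v v)
    (hs : ∀ u, ¬ E u s) (ht : ∀ u, ¬ E t u) :
    ∀ (k : ℕ) (f : V ⊕ V → V ⊕ V → ℕ),
      (∀ a b, ¬ SplitEdge E a b → f a b = 0) →
      (∀ w, w ≠ Sum.inl s → w ≠ Sum.inr t → (∑ a, f a w) = ∑ b, f w b) →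
      f (Sum.inl s) (Sum.inr s) = k →
      ∃ L : List (List (V ⊕ V)), L.length = k ∧
        (∀ w ∈ L, w.head? = some (Sum.inl s) ∧ w.getLast? = some (Sum.inr t) ∧
          w.Chain' (SplitEdge E)) ∧
        (∀ a b, f a b ≤ (L.map (fun w => cnt (a, b) (pairs w))).sum) := by
  intro k
  induction k with
  | zero =>
    intro f hsupp hcons hval
    refine ⟨[], rfl, by simp, fun a b => ?_⟩
    rw [flow_eq_zero hacyc hs ht hsupp hcons hval a b]
    exact Nat.zero_le _
  | succ k ihk =>
    intro f hsupp hcons hval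
    have h0 : 0 < f (Sum.inl s) (Sum.inr s) := by rw [hval]; exact Nat.succ_pos k
    obtain ⟨w', hw1, hw2, hw3⟩ := walk_to_sink hacyc hs hsupp hcons (Sum.inr s)
      (Or.inr ⟨Sum.inl s, h0⟩)
    cases w' with
    | nil => simp at hw1
    | cons z' w'' =>
    rw [List.head?_cons, Option.some_inj] at hw1
    subst hw1
    set w : List (V ⊕ V) := Sum.inl s :: Sum.inr s :: w'' with hw
    have hwch : w.Chain' (fun a b => 0 < f a b) := by
      rw [hw, List.Chain', List.isChain_cons_cons]
      exact ⟨h0, hw3⟩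
    have hwSE : w.Chain' (SplitEdge E) := hwch.imp (fun a b hab => by
      by_contra he
      rw [hsupp _ _ he] at hab
      exact Nat.lt_irrefl 0 hab)
    have hwnd : w.Nodup := nodup_of_chain' (splitEdge_acyclic hacyc) hwSE
    have hpnd : (pairs w).Nodup := by
      have : ((pairs w).map Prod.fst).Nodup := by
        rw [map_fst_pairs]
        exact hwnd.sublist (List.dropLast_sublist w)
      exact this.of_map
    have hle : ∀ a b, cnt (a, b) (pairs w) ≤ f a b := by
      intro a b
      rcases Nat.eq_zero_or_pos (cnt (a, b) (pairs w)) with h | h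
      · rw [h]; exact Nat.zero_le _
      · have hmem := mem_of_cnt_pos h
        have := chain'_of_pairs hwch hmem
        have h1 : cnt (a, b) (pairs w) ≤ 1 := cnt_le_one_of_nodup hpnd
        exact Nat.le_trans h1 this
    set g : V ⊕ V → V ⊕ V → ℕ := fun a b => f a b - cnt (a, b) (pairs w) with hg
    have hghead : w.head? = some (Sum.inl s) := rfl
    have hglast : w.getLast? = some (Sum.inr t) := by
      rw [hw, List.getLast?_cons_cons]
      exact hw2
    have hgsupp : ∀ a b, ¬ SplitEdge E a b → g a b = 0 := by
      intro a b he
      rw [hg]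
      simp only
      rw [hsupp _ _ he]
      exact Nat.zero_sub _
    have hgcons : ∀ x, x ≠ Sum.inl s → x ≠ Sum.inr t → (∑ a, g a x) = ∑ b, g x b := by
      intro x hx1 hx2
      rw [hg]
      simp only
      rw [Finset.sum_tsub_distrib Finset.univ (fun a _ => hle a x),
        Finset.sum_tsub_distrib Finset.univ (fun b _ => hle x b),
        hcons x hx1 hx2, cnt_pairs_balance hghead hglast hx1 hx2]
    have hcnt1 : cnt (Sum.inl s, Sum.inr s) (pairs w) = 1 := by
      have hmem : ((Sum.inl s : V ⊕ V), (Sum.inr s : V ⊕ V)) ∈ pairs w := by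
        rw [hw, pairs_cons_cons]
        exact List.mem_cons_self
      exact Nat.le_antisymm (cnt_le_one_of_nodup hpnd) (cnt_pos_of_mem hmem)
    have hgval : g (Sum.inl s) (Sum.inr s) = k := by
      rw [hg]
      simp only
      rw [hcnt1, hval]
      rfl
    obtain ⟨L', hL1, hL2, hL3⟩ := ihk g hgsupp hgcons hgval
    refine ⟨w :: L', by simp [hL1], ?_, ?_⟩
    · intro w₀ hw₀
      rcases List.mem_cons.1 hw₀ with rfl | hw₀
      · exact ⟨hghead, hglast, hwSE⟩
      · exact hL2 w₀ hw₀
    · intro a b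
      rw [List.map_cons, List.sum_cons]
      have : f a b = g a b + cnt (a, b) (pairs w) := by
        rw [hg]
        simp only
        rw [Nat.sub_add_cancel (hle a b)]
      rw [this, Nat.add_comm]
      exact Nat.add_le_add_left (hL3 a b) _
end flow
end MCF

namespace MCF
section proj
variable {V : Type*} {E : V → V → Prop} {t : V}

lemma project : ∀ (w : List (V ⊕ V)), w.Chain' (SplitEdge E) → ∀ a : V,
    w.head? = some (Sum.inl a) → w.getLast? = some (Sum.inr t) →
    ∃ l : List V, IsSTWalk E a t l ∧ (∀ v, Sum.inl v ∈ w → v ∈ l)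
  | [] => by intro _ a ha; simp at ha
  | [x] => by
    intro _ a ha hl
    rw [List.head?_cons, Option.some_inj] at ha
    rw [List.getLast?_singleton, Option.some_inj] at hl
    subst ha
    simp at hl
  | x :: y :: rest => by
    intro hch a ha hl
    rw [List.head?_cons, Option.some_inj] at ha
    subst ha
    rw [List.Chain', List.isChain_cons_cons] at hch
    obtain ⟨hxy, hch'⟩ := hch
    have hy : y = Sum.inr a := splitEdge_from_inl hxy
    subst hy
    match rest with
    | [] =>
      rw [List.getLast?_cons_cons, List.getLast?_singleton, Option.some_inj,
        Sum.inr.injEq] at hl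
      subst hl
      refine ⟨[a], ⟨⟨by simp, List.isChain_singleton _⟩, rfl, rfl⟩, ?_⟩
      intro v hv
      simp only [List.mem_cons, List.mem_singleton] at hv ⊢
      rcases hv with h | h | h
      · exact Or.inl (Sum.inl.inj h)
      · exact absurd h (by simp)
      · simp at h
    | z :: rest' =>
      rw [List.isChain_cons_cons] at hch'
      obtain ⟨hyz, hch''⟩ := hch'
      match z, hyz with
      | Sum.inl b, hyz =>
        have hE : E a b := hyz
        rw [List.getLast?_cons_cons, List.getLast?_cons_cons] at hl
        obtain ⟨l', hSTW, hmem⟩ := project (Sum.inl b :: rest') hch'' b rfl hl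
        obtain ⟨⟨hne, hchl⟩, hhead, hlast⟩ := hSTW
        refine ⟨a :: l', ⟨⟨by simp, ?_⟩, rfl, ?_⟩, ?_⟩
        · cases l' with
          | nil => simp at hhead
          | cons b' l'' =>
            rw [List.head?_cons, Option.some_inj] at hhead
            rw [List.Chain', List.isChain_cons_cons]
            exact ⟨hhead ▸ hE, hchl⟩
        · cases l' with
          | nil => simp at hhead
          | cons b' l'' =>
            rw [List.getLast?_cons_cons]
            exact hlast
        · intro v hv
          rcases List.mem_cons.1 hv with h | hv'
          · cases h
            exact List.mem_cons_self
          rcases List.mem_cons.1 hv' with h | hv''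
          · exact absurd h (by simp)
          · exact List.mem_cons_of_mem a (hmem v hv'')
end proj
end MCF

open MCF

/-- In a finite DAG (source `s` of in-degree 0, sink `t` of
out-degree 0, `|V| ≥ 3`, every vertex on some s-t path), the minimum number of
s-t paths needed to cover all vertices equals the minimum value of a feasible
flow in the vertex-split network. -/
theorem min_cover_eq_min_flow {V : Type*} [Fintype V] [DecidableEq V]
    (E : V → V → Prop) (s t : V) (hst : s ≠ t)
    (hcard : 3 ≤ Fintype.card V)
    (hacyc : ∀ v, ¬ Relation.TransGen E v v)
    (hs : ∀ u, ¬ E u s) (ht : ∀ u, ¬ E t u)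
    (hall : ∀ v : V, ∃ p : List V, IsSTWalk E s t p ∧ v ∈ p) :
    sInf {n : ℕ | ∃ p : Fin n → List V,
        (∀ i, IsSTWalk E s t (p i)) ∧ (∀ v : V, ∃ i, v ∈ p i)}
      = sInf {k : ℕ | ∃ f : V ⊕ V → V ⊕ V → ℕ,
        FeasibleSplitFlow E s t f ∧ SplitFlowValue s f = k} := by
    classical
  set A := {n : ℕ | ∃ p : Fin n → List V,
      (∀ i, IsSTWalk E s t (p i)) ∧ (∀ v : V, ∃ i, v ∈ p i)} with hA
  set B := {k : ℕ | ∃ f : V ⊕ V → V ⊕ V → ℕ,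
      FeasibleSplitFlow E s t f ∧ SplitFlowValue s f = k} with hB
  set m := Fintype.card V - 2 with hm
  have hm1 : 1 ≤ m := by omega
  set S : Finset V := (Finset.univ.erase t).erase s with hS
  have hScard : S.card = m := by
    rw [hS, Finset.card_erase_of_mem (by simp [hst]), Finset.card_erase_of_mem (by simp)]
    rw [Finset.card_univ]
    omega
  obtain ⟨u0, hu0s, hu0t⟩ : ∃ u : V, u ≠ s ∧ u ≠ t := by
    have hpos : 0 < S.card := by omega
    obtain ⟨u, hu⟩ := Finset.card_pos.1 hpos
    rw [hS, Finset.mem_erase, Finset.mem_erase] at hu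
    exact ⟨u, hu.1, hu.2.1⟩
  -- A contains m
  have hmA : m ∈ A := by
    have e : ↥S ≃ Fin m := Fintype.equivFinOfCardEq (by rw [Fintype.card_coe, hScard])
    refine ⟨fun i => (hall ((e.symm i) : V)).choose,
      fun i => ((hall _).choose_spec).1, ?_⟩
    intro v
    by_cases hv : v ∈ S
    · refine ⟨e ⟨v, hv⟩, ?_⟩
      have hv2 : ((e.symm (e ⟨v, hv⟩)) : V) = v := by rw [Equiv.symm_apply_apply]
      show v ∈ (hall ((e.symm (e ⟨v, hv⟩)) : V)).choose
      have h := ((hall ((e.symm (e ⟨v, hv⟩)) : V)).choose_spec).2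
      rw [hv2] at h ⊢
      exact h
    · have hi0 : (0 : ℕ) < m := hm1
      have hw := (hall ((e.symm ⟨0, hi0⟩) : V)).choose_spec.1
      have hv' : v = s ∨ v = t := by
        by_contra hc
        push_neg at hc
        exact hv (by simp [hS, hc.1, hc.2])
      refine ⟨⟨0, hi0⟩, ?_⟩
      rcases hv' with rfl | rfl
      · exact List.mem_of_mem_head? hw.2.1
      · exact List.mem_of_mem_getLast? hw.2.2
  have hAne : A.Nonempty := ⟨m, hmA⟩
  have hnA : sInf A ∈ A := Nat.sInf_mem hAne
  have hnm : sInf A ≤ m := Nat.sInf_le hmA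
  set n := sInf A with hn
  obtain ⟨p, hp1, hp2⟩ := hnA
  -- facts about each path
  have hch : ∀ i, (p i).Chain' E := fun i => (hp1 i).1.2
  have hhead : ∀ i, (p i).head? = some s := fun i => (hp1 i).2.1
  have hlast : ∀ i, (p i).getLast? = some t := fun i => (hp1 i).2.2
  have hwch : ∀ i, (splitList (p i)).Chain' (SplitEdge E) :=
    fun i => chain'_splitList (hch i)
  have hwh : ∀ i, (splitList (p i)).head? = some (Sum.inl s) :=
    fun i => head?_splitList (hhead i)
  have hwl : ∀ i, (splitList (p i)).getLast? = some (Sum.inr t) :=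
    fun i => getLast?_splitList (hlast i)
  have hpnd : ∀ i, (pairs (splitList (p i))).Nodup := by
    intro i
    have hwnd : (splitList (p i)).Nodup :=
      nodup_splitList (nodup_of_chain' hacyc (hch i))
    have h1 : ((pairs (splitList (p i))).map Prod.fst).Nodup := by
      rw [map_fst_pairs]
      exact hwnd.sublist (List.dropLast_sublist _)
    exact h1.of_map
  set F : V ⊕ V → V ⊕ V → ℕ :=
    fun a b => ∑ i : Fin n, cnt (a, b) (pairs (splitList (p i))) with hF
  have hFsupp : ∀ a b, ¬ SplitEdge E a b → F a b = 0 := by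
    intro a b hab
    refine Finset.sum_eq_zero (fun i _ => ?_)
    rcases Nat.eq_zero_or_pos (cnt (a, b) (pairs (splitList (p i)))) with h | h
    · exact h
    · exact absurd (chain'_of_pairs (hwch i) (mem_of_cnt_pos h)) hab
  have hFval : SplitFlowValue s F = n := by
    rw [value_eq_source_edge hFsupp, hF]
    have h1 : ∀ i : Fin n,
        cnt ((Sum.inl s : V ⊕ V), (Sum.inr s : V ⊕ V)) (pairs (splitList (p i))) = 1 := by
      intro i
      refine Nat.le_antisymm (cnt_le_one_of_nodup (hpnd i)) (cnt_pos_of_mem ?_)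
      exact mem_pairs_splitList (List.mem_of_mem_head? (hhead i))
    simp [h1]
  have hnB : n ∈ B := by
    show ∃ f : V ⊕ V → V ⊕ V → ℕ, FeasibleSplitFlow E s t f ∧ SplitFlowValue s f = n
    refine ⟨F, ⟨hFsupp, ?_, ?_, ?_⟩, hFval⟩
    · -- lower bounds
      intro a b
      rcases a with v | v <;> rcases b with w' | w'
      case inl.inl => exact Nat.zero_le _
      case inr.inl => exact Nat.zero_le _
      case inr.inr => exact Nat.zero_le _
      case inl.inr =>
        show (if v = w' ∧ v ≠ s ∧ v ≠ t then 1 else 0) ≤ _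
        split_ifs with h
        · rw [← h.1]
          obtain ⟨i, hvi⟩ := hp2 v
          have hpos : 0 < cnt ((Sum.inl v : V ⊕ V), (Sum.inr v : V ⊕ V))
              (pairs (splitList (p i))) := cnt_pos_of_mem (mem_pairs_splitList hvi)
          exact le_trans hpos (Finset.single_le_sum
            (f := fun j => cnt ((Sum.inl v : V ⊕ V), (Sum.inr v : V ⊕ V))
              (pairs (splitList (p j)))) (fun j _ => Nat.zero_le _) (Finset.mem_univ i))
        · exact Nat.zero_le _
    · -- capacity
      intro a b _
      have h1 : F a b ≤ ∑ _i : Fin n, 1 :=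
        Finset.sum_le_sum (fun i _ => cnt_le_one_of_nodup (hpnd i))
      simp only [Finset.sum_const, Finset.card_univ, Fintype.card_fin, smul_eq_mul,
        Nat.mul_one] at h1
      exact h1.trans (hm ▸ hnm)
    · -- conservation
      intro x hx1 hx2
      have hbal : ∀ i : Fin n, (∑ a, cnt (a, x) (pairs (splitList (p i))))
          = ∑ b, cnt (x, b) (pairs (splitList (p i))) :=
        fun i => cnt_pairs_balance (hwh i) (hwl i) hx1 hx2
      calc (∑ a, F a x) = ∑ i : Fin n, ∑ a, cnt (a, x) (pairs (splitList (p i))) :=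
            Finset.sum_comm
        _ = ∑ i : Fin n, ∑ b, cnt (x, b) (pairs (splitList (p i))) :=
            Finset.sum_congr rfl (fun i _ => hbal i)
        _ = ∑ b, F x b := Finset.sum_comm
  -- direction 2 : the minimum flow value is a cover size
  have hBne : B.Nonempty := ⟨n, hnB⟩
  have hkB : sInf B ∈ B := Nat.sInf_mem hBne
  set k := sInf B with hk
  obtain ⟨f, ⟨hsupp, hlb, hcap, hcons⟩, hval⟩ := hkB
  have hfval : f (Sum.inl s) (Sum.inr s) = k := by
    rw [← value_eq_source_edge hsupp, hval]
  obtain ⟨L, hL1, hL2, hL3⟩ := decomp hacyc hs ht k f hsupp hcons hfval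
  have hproj : ∀ i : Fin L.length, ∃ l : List V, IsSTWalk E s t l ∧
      (∀ v, Sum.inl v ∈ L.get i → v ∈ l) := by
    intro i
    obtain ⟨hh, hl, hc⟩ := hL2 (L.get i) (List.get_mem L i)
    exact project _ hc s hh hl
  choose q hq1 hq2 using hproj
  have hlbv : ∀ v : V, v ≠ s → v ≠ t → 1 ≤ f (Sum.inl v) (Sum.inr v) := by
    intro v hv1 hv2
    have := hlb (Sum.inl v) (Sum.inr v)
    rw [show SplitLB s t (Sum.inl v) (Sum.inr v) = 1 from if_pos ⟨rfl, hv1, hv2⟩] at this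
    exact this
  have hk1 : 1 ≤ k := by
    have h2 := le_trans (hlbv u0 hu0s hu0t) (hL3 (Sum.inl u0) (Sum.inr u0))
    by_contra hc
    push_neg at hc
    interval_cases k
    rw [List.length_eq_zero_iff] at hL1
    subst hL1
    simp at h2
  have hkA : k ∈ A := by
    show ∃ p : Fin k → List V,
      (∀ i, IsSTWalk E s t (p i)) ∧ (∀ v : V, ∃ i, v ∈ p i)
    refine ⟨fun i => q (Fin.cast hL1.symm i), fun i => hq1 _, ?_⟩
    intro v
    by_cases hv : v ≠ s ∧ v ≠ t
    · have h2 := le_trans (hlbv v hv.1 hv.2) (hL3 (Sum.inl v) (Sum.inr v))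
      obtain ⟨x, hxL, hxpos⟩ : ∃ x ∈ L,
          0 < cnt ((Sum.inl v : V ⊕ V), (Sum.inr v : V ⊕ V)) (pairs x) := by
        by_contra hc
        push_neg at hc
        have hz : (L.map (fun w => cnt ((Sum.inl v : V ⊕ V), (Sum.inr v : V ⊕ V))
            (pairs w))).sum = 0 := by
          apply List.sum_eq_zero
          intro y hy
          obtain ⟨x, hx, rfl⟩ := List.mem_map.1 hy
          exact Nat.le_zero.1 (hc x hx)
        rw [hz] at h2
        exact absurd h2 (by norm_num)
      obtain ⟨j, hj⟩ := List.get_of_mem hxL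
      refine ⟨Fin.cast hL1 j, ?_⟩
      have hmem : Sum.inl v ∈ L.get j := by
        have h3 : (Sum.inl v : V ⊕ V) ∈ x.dropLast := by
          rw [← map_fst_pairs]
          exact List.mem_map_of_mem (f := Prod.fst) (mem_of_cnt_pos hxpos)
        rw [hj]
        exact (List.dropLast_sublist x).subset h3
      have h4 := hq2 j v hmem
      exact h4
    · push_neg at hv
      refine ⟨⟨0, hk1⟩, ?_⟩
      have hw := hq1 (Fin.cast hL1.symm ⟨0, hk1⟩)
      by_cases hvs : v = s
      · subst hvs
        exact List.mem_of_mem_head? hw.2.1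
      · rw [hv hvs]
        exact List.mem_of_mem_getLast? hw.2.2
  exact le_antisymm (Nat.sInf_le hkA) (Nat.sInf_le hnB)
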